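/- An integer β is an essential value of the integer-valued supermodular function p if and only if there exists a critical value λ (a real number at which the family of maximizers of p(X) − λ|X| has at least two members) satisfying β ≥ λ > β − 1. Consequently, the essential values are exactly the distinct members of the rounded-up critical values ⌈λ₁⌉ ≥ ⌈λ₂⌉ ≥ ⋯ ≥ ⌈λ_r⌉. -/
import Mathlib


open Finset

variable {α : Type*} [Fintype α] [DecidableEq α]

def Supermodular (p : Finset α → EReal) : Prop :=
  ∀ X Y : Finset α, p X + p Y ≤ p (X ∩ Y) + p (X ∪ Y)

/-- `p` takes values in `ℤ ∪ {−∞}`. -/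
def IntegerValued (p : Finset α → EReal) : Prop :=
  ∀ X : Finset α, p X = ⊥ ∨ ∃ n : ℤ, p X = ((n : ℝ) : EReal)

/-- `X` maximizes `Z ↦ p(Z) − λ|Z|` over all subsets `Z` of the ground-set. -/
def IsMaximizer (p : Finset α → EReal) (lam : ℝ) (X : Finset α) : Prop :=
  ∀ Y : Finset α,
    p Y - ((lam * (Y.card : ℝ) : ℝ) : EReal) ≤ p X - ((lam * (X.card : ℝ) : ℝ) : EReal)

/-- `L` assigns to each real `λ` the smallest maximizer of `X ↦ p(X) − λ|X|`. -/
def SmallestMaximizerFun (p : Finset α → EReal) (L : ℝ → Finset α) : Prop :=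
  ∀ lam : ℝ, IsMaximizer p lam (L lam) ∧ ∀ X : Finset α, IsMaximizer p lam X → L lam ⊆ X

/-- `λ` is a critical value: the family of maximizers of `p(X) − λ|X|` has at
least two members. -/
def IsCriticalValue (p : Finset α → EReal) (lam : ℝ) : Prop :=
  ∃ X Y : Finset α, X ≠ Y ∧ IsMaximizer p lam X ∧ IsMaximizer p lam Y

set_option linter.unusedSectionVars false
set_option linter.unusedVariables false
set_option linter.deprecated false

lemma aux_real (p : Finset α → EReal) (hint : IntegerValued p) {X : Finset α}
    (hX : p X ≠ ⊥) : ∃ x : ℝ, p X = ((x : ℝ) : EReal) := by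
  rcases hint X with h | ⟨n, h⟩
  · exact absurd h hX
  · exact ⟨n, h⟩
lemma aux_max_ne_bot (p : Finset α → EReal) (hp0 : p ∅ = 0) {lam : ℝ} {X : Finset α}
    (hX : IsMaximizer p lam X) : p X ≠ ⊥ := by
  intro h
  have h2 := hX ∅
  rw [h, hp0] at h2
  simp at h2
lemma aux_f_iff {p : Finset α → EReal} {Z X : Finset α} {lam z x : ℝ}
    (hZ : p Z = ((z : ℝ) : EReal)) (hX : p X = ((x : ℝ) : EReal)) :
    (p Z - ((lam * (Z.card : ℝ) : ℝ) : EReal) ≤ p X - ((lam * (X.card : ℝ) : ℝ) : EReal)) ↔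
      z - lam * Z.card ≤ x - lam * X.card := by
  rw [hZ, hX, ← EReal.coe_sub, ← EReal.coe_sub, EReal.coe_le_coe_iff]
lemma aux_isMaximizer_of (p : Finset α → EReal) (hint : IntegerValued p)
    {lam x : ℝ} {X : Finset α} (hX : p X = ((x : ℝ) : EReal))
    (h : ∀ Z : Finset α, ∀ z : ℝ, p Z = ((z : ℝ) : EReal) →
      z - lam * Z.card ≤ x - lam * X.card) : IsMaximizer p lam X := by
  intro Y
  by_cases hY : p Y = ⊥
  · rw [hY]; simp
  · obtain ⟨y, hy⟩ := aux_real p hint hY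
    exact (aux_f_iff hy hX).mpr (h Y y hy)

-- supermodularity in reals
lemma aux_sup_real (p : Finset α → EReal) (hsup : Supermodular p) (hint : IntegerValued p)
    {X Y : Finset α} {x y : ℝ} (hx : p X = ((x : ℝ) : EReal)) (hy : p Y = ((y : ℝ) : EReal)) :
    ∃ u v : ℝ, p (X ∩ Y) = ((u : ℝ) : EReal) ∧ p (X ∪ Y) = ((v : ℝ) : EReal) ∧
      x + y ≤ u + v := by
  have hs := hsup X Y
  rw [hx, hy, ← EReal.coe_add] at hs
  have hu : p (X ∩ Y) ≠ ⊥ := by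
    intro h; rw [h, EReal.bot_add] at hs; exact absurd (le_bot_iff.mp hs) (EReal.coe_ne_bot _)
  have hv : p (X ∪ Y) ≠ ⊥ := by
    intro h; rw [h, EReal.add_bot] at hs; exact absurd (le_bot_iff.mp hs) (EReal.coe_ne_bot _)
  obtain ⟨u, hu'⟩ := aux_real p hint hu
  obtain ⟨v, hv'⟩ := aux_real p hint hv
  refine ⟨u, v, hu', hv', ?_⟩
  rw [hu', hv', ← EReal.coe_add, EReal.coe_le_coe_iff] at hs
  exact hs

lemma aux_mono (p : Finset α → EReal) (hp0 : p ∅ = 0) (hsup : Supermodular p)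
    (hint : IntegerValued p) {lam lam' : ℝ} (hlt : lam' < lam) {X Y : Finset α}
    (hX : IsMaximizer p lam X) (hY : IsMaximizer p lam' Y) : X ⊆ Y := by
  obtain ⟨x, hx⟩ := aux_real p hint (aux_max_ne_bot p hp0 hX)
  obtain ⟨y, hy⟩ := aux_real p hint (aux_max_ne_bot p hp0 hY)
  obtain ⟨u, v, hu, hv, h3⟩ := aux_sup_real p hsup hint hx hy
  have h1 : u - lam * (X ∩ Y).card ≤ x - lam * X.card := (aux_f_iff hu hx).mp (hX (X ∩ Y))
  have h2 : v - lam' * (X ∪ Y).card ≤ y - lam' * Y.card := (aux_f_iff hv hy).mp (hY (X ∪ Y))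
  have hc2 : ((X \ Y).card : ℝ) + ((X ∩ Y).card : ℝ) = (X.card : ℝ) := by
    exact_mod_cast congrArg (Nat.cast : ℕ → ℝ) (Finset.card_sdiff_add_card_inter X Y)
  have hc3 : ((X \ Y).card : ℝ) + (Y.card : ℝ) = ((X ∪ Y).card : ℝ) := by
    exact_mod_cast congrArg (Nat.cast : ℕ → ℝ) (Finset.card_sdiff_add_card X Y)
  have knn : (0 : ℝ) ≤ ((X \ Y).card : ℝ) := Nat.cast_nonneg _
  have e1 : lam * ((X \ Y).card : ℝ) + lam * ((X ∩ Y).card : ℝ) = lam * (X.card : ℝ) := by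
    linear_combination lam * hc2
  have e2 : lam' * ((X \ Y).card : ℝ) + lam' * (Y.card : ℝ) = lam' * ((X ∪ Y).card : ℝ) := by
    linear_combination lam' * hc3
  have hk : ((X \ Y).card : ℝ) = 0 := by nlinarith
  have : (X \ Y).card = 0 := by exact_mod_cast hk
  exact Finset.sdiff_eq_empty_iff_subset.mp (Finset.card_eq_zero.mp this)

lemma aux_union (p : Finset α → EReal) (hp0 : p ∅ = 0) (hsup : Supermodular p)
    (hint : IntegerValued p) {lam : ℝ} {X Y : Finset α}
    (hX : IsMaximizer p lam X) (hY : IsMaximizer p lam Y) : IsMaximizer p lam (X ∪ Y) := by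
  obtain ⟨x, hx⟩ := aux_real p hint (aux_max_ne_bot p hp0 hX)
  obtain ⟨y, hy⟩ := aux_real p hint (aux_max_ne_bot p hp0 hY)
  obtain ⟨u, v, hu, hv, h3⟩ := aux_sup_real p hsup hint hx hy
  have h1 : u - lam * (X ∩ Y).card ≤ x - lam * X.card := (aux_f_iff hu hx).mp (hX (X ∩ Y))
  have hc : ((X ∩ Y).card : ℝ) + ((X ∪ Y).card : ℝ) = (X.card : ℝ) + (Y.card : ℝ) := by
    exact_mod_cast congrArg (Nat.cast : ℕ → ℝ) (Finset.card_inter_add_card_union X Y)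
  have e1 : lam * ((X ∩ Y).card : ℝ) + lam * ((X ∪ Y).card : ℝ)
      = lam * (X.card : ℝ) + lam * (Y.card : ℝ) := by linear_combination lam * hc
  have key : y - lam * Y.card ≤ v - lam * (X ∪ Y).card := by linarith
  apply aux_isMaximizer_of p hint hv
  intro Z z hz
  exact le_trans ((aux_f_iff hz hy).mp (hY Z)) key

/-- An integer `b` is an essential value (i.e. `L(b) ≠ L(b−1)`) iff there exists a
critical value `λ` with `b ≥ λ > b − 1`, i.e. `⌈λ⌉ = b`; hence the essential values
are exactly the distinct rounded-up critical values. -/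
theorem essential_iff_ceil_of_critical (p : Finset α → EReal) (hp0 : p ∅ = 0)
    (hfin : p (Finset.univ : Finset α) ≠ ⊥) (hsup : Supermodular p)
    (hint : IntegerValued p) (L : ℝ → Finset α) (hL : SmallestMaximizerFun p L) :
    ∀ b : ℤ, L (b : ℝ) ≠ L ((b : ℝ) - 1) ↔
      ∃ lam : ℝ, ((b : ℝ) - 1 < lam ∧ lam ≤ (b : ℝ)) ∧ IsCriticalValue p lam := by
  intro b
  constructor
  · -- essential → critical value in (b-1, b]
    intro hne
    have hA : IsMaximizer p ((b : ℝ) - 1) (L ((b : ℝ) - 1)) := (hL ((b : ℝ) - 1)).1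
    have hB : IsMaximizer p (b : ℝ) (L (b : ℝ)) := (hL (b : ℝ)).1
    set A := L ((b : ℝ) - 1) with hAdef
    set B := L (b : ℝ) with hBdef
    have hBA : B ⊆ A := aux_mono p hp0 hsup hint (by linarith : (b : ℝ) - 1 < (b : ℝ)) hB hA
    have hss : B ⊂ A := HasSubset.Subset.ssubset_of_ne hBA hne
    obtain ⟨a, ha⟩ := aux_real p hint (aux_max_ne_bot p hp0 hA)
    -- the candidate crossing sets
    set S : Finset (Finset α) :=
      Finset.univ.filter (fun C => p C ≠ ⊥ ∧ C.card < A.card) with hSdef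
    have hBS : B ∈ S := by
      rw [hSdef, Finset.mem_filter]
      exact ⟨Finset.mem_univ _, aux_max_ne_bot p hp0 hB, Finset.card_lt_card hss⟩
    set g : Finset α → ℝ := fun C => (a - (p C).toReal) / ((A.card : ℝ) - (C.card : ℝ))
      with hgdef
    obtain ⟨C₀, hC₀S, hC₀min⟩ := S.exists_min_image g ⟨B, hBS⟩
    set c := g C₀ with hcdef
    -- generic facts about members of S
    have hmem : ∀ C ∈ S, ∃ w : ℝ, p C = ((w : ℝ) : EReal) ∧ (p C).toReal = w ∧
        (C.card : ℝ) < (A.card : ℝ) := by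
      intro C hC
      rw [hSdef, Finset.mem_filter] at hC
      obtain ⟨w, hw⟩ := aux_real p hint hC.2.1
      exact ⟨w, hw, by rw [hw]; exact EReal.toReal_coe w, by exact_mod_cast hC.2.2⟩
    have hgt : ∀ C ∈ S, (b : ℝ) - 1 < g C := by
      intro C hC
      obtain ⟨w, hw, hwt, hcard⟩ := hmem C hC
      have hd : (0 : ℝ) < (A.card : ℝ) - (C.card : ℝ) := by linarith
      have h1 : w - ((b : ℝ) - 1) * C.card ≤ a - ((b : ℝ) - 1) * A.card :=
        (aux_f_iff hw ha).mp (hA C)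
      have hge : (b : ℝ) - 1 ≤ g C := by
        rw [hgdef]
        simp only
        rw [hwt, le_div_iff₀ hd]
        nlinarith
      rcases lt_or_eq_of_le hge with h | h
      · exact h
      -- equality case: C would be a maximizer at b - 1, contradicting minimality of A
      exfalso
      have heq : a - w = ((b : ℝ) - 1) * ((A.card : ℝ) - (C.card : ℝ)) := by
        have := h.symm
        rw [hgdef] at this
        simp only at this
        rw [hwt, div_eq_iff (ne_of_gt hd)] at this
        linarith [this]
      have hCmax : IsMaximizer p ((b : ℝ) - 1) C := by
        apply aux_isMaximizer_of p hint hw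
        intro Z z hz
        have := (aux_f_iff hz ha).mp (hA Z)
        nlinarith
      have := Finset.card_le_card ((hL ((b : ℝ) - 1)).2 C hCmax)
      rw [← hAdef] at this
      exact absurd this (by exact_mod_cast not_le.mpr hcard)
    -- c ≤ b, using B ∈ S and B maximizer at b
    have hcb : c ≤ (b : ℝ) := by
      obtain ⟨w, hw, hwt, hcard⟩ := hmem B hBS
      have hd : (0 : ℝ) < (A.card : ℝ) - (B.card : ℝ) := by linarith
      have h1 : a - (b : ℝ) * A.card ≤ w - (b : ℝ) * B.card := (aux_f_iff ha hw).mp (hB A)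
      have hgB : g B ≤ (b : ℝ) := by
        rw [hgdef]
        simp only
        rw [hwt, div_le_iff₀ hd]
        nlinarith
      exact le_trans (hC₀min B hBS) hgB
    have hcgt : (b : ℝ) - 1 < c := hgt C₀ hC₀S
    -- A is a maximizer at c
    obtain ⟨w₀, hw₀, hw₀t, hcard₀⟩ := hmem C₀ hC₀S
    have hAc : IsMaximizer p c A := by
      apply aux_isMaximizer_of p hint ha
      intro Z z hz
      by_cases hZ : (Z.card : ℝ) < (A.card : ℝ)
      · have hZS : Z ∈ S := by
          rw [hSdef, Finset.mem_filter]
          refine ⟨Finset.mem_univ _, ?_, by exact_mod_cast hZ⟩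
          rw [hz]; exact EReal.coe_ne_bot z
        have hle : c ≤ g Z := hC₀min Z hZS
        have hd : (0 : ℝ) < (A.card : ℝ) - (Z.card : ℝ) := by linarith
        rw [hgdef] at hle
        simp only at hle
        have hzt : (p Z).toReal = z := by rw [hz]; exact EReal.toReal_coe z
        rw [hzt, le_div_iff₀ hd] at hle
        nlinarith
      · push_neg at hZ
        have h1 : z - ((b : ℝ) - 1) * Z.card ≤ a - ((b : ℝ) - 1) * A.card :=
          (aux_f_iff hz ha).mp (hA Z)
        nlinarith
    -- C₀ is also a maximizer at c, with value equal to A's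
    have hd₀ : (0 : ℝ) < (A.card : ℝ) - (C₀.card : ℝ) := by linarith
    have heq₀ : a - w₀ = c * ((A.card : ℝ) - (C₀.card : ℝ)) := by
      rw [hcdef, hgdef]
      simp only
      rw [hw₀t]
      field_simp
    have hC₀max : IsMaximizer p c C₀ := by
      apply aux_isMaximizer_of p hint hw₀
      intro Z z hz
      have h1 : z - c * Z.card ≤ a - c * A.card := by
        have := hAc Z
        exact (aux_f_iff hz ha).mp this
      nlinarith
    refine ⟨c, ⟨hcgt, hcb⟩, C₀, A, ?_, hC₀max, hAc⟩
    intro h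
    rw [h] at hcard₀
    exact lt_irrefl _ hcard₀
  · -- critical value in (b-1, b] → essential
    rintro ⟨lam, ⟨h1, h2⟩, X, Y, hXY, hX, hY⟩
    have hU : IsMaximizer p lam (X ∪ Y) := aux_union p hp0 hsup hint hX hY
    have hsub1 : L lam ⊆ X ∩ Y :=
      Finset.subset_inter ((hL lam).2 X hX) ((hL lam).2 Y hY)
    have hne : X ∩ Y ≠ X ∪ Y := by
      intro h
      apply hXY
      apply Finset.Subset.antisymm
      · exact le_trans Finset.subset_union_left (le_of_eq h.symm) |>.trans
          Finset.inter_subset_right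
      · exact le_trans Finset.subset_union_right (le_of_eq h.symm) |>.trans
          Finset.inter_subset_left
    have hlt : (X ∩ Y).card < (X ∪ Y).card :=
      Finset.card_lt_card (HasSubset.Subset.ssubset_of_ne
        (le_trans Finset.inter_subset_left Finset.subset_union_left) hne)
    have hU2 : X ∪ Y ⊆ L ((b : ℝ) - 1) := aux_mono p hp0 hsup hint h1 hU (hL _).1
    have hb : L (b : ℝ) ⊆ L lam := by
      rcases eq_or_lt_of_le h2 with heq | hlt2
      · rw [heq]
      · exact aux_mono p hp0 hsup hint hlt2 (hL (b : ℝ)).1 (hL lam).1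
    intro heq
    have hcard : (L (b : ℝ)).card < (L ((b : ℝ) - 1)).card :=
      lt_of_le_of_lt (Finset.card_le_card (le_trans hb hsub1))
        (lt_of_lt_of_le hlt (Finset.card_le_card hU2))
    rw [heq] at hcard
    exact lt_irrefl _ hcard
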